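/- Let (t_i)_{i∈ℕ} be a sequence of real numbers that is algebraically independent over ℚ, and for indices a, b set P_{a,b} = (t_a + t_b, t_a² + t_a t_b + t_b²) ∈ ℝ². Then three points P_{e₁}, P_{e₂}, P_{e₃} indexed by three distinct unordered pairs e₁, e₂, e₃ of natural numbers are collinear if and only if e₁, e₂, e₃ form a triangle, i.e., e₁ = {i,j}, e₂ = {j,k}, e₃ = {i,k} for some three distinct indices i, j, k. -/

import Mathlib

/-- The point `P(a,b) = (a + b, a² + ab + b²)` in the plane. -/
noncomputable def Ppt (a b : ℝ) : ℝ × ℝ := (a + b, a ^ 2 + a * b + b ^ 2)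

/-- The collinearity determinant for three points of the form `Ppt`. -/
def Dx (A B C D E F : ℝ) : ℝ :=
  (C + D - (A + B)) * (E ^ 2 + E * F + F ^ 2 - (A ^ 2 + A * B + B ^ 2)) -
    (E + F - (A + B)) * (C ^ 2 + C * D + D ^ 2 - (A ^ 2 + A * B + B ^ 2))

lemma Dx_swap1 (A B C D E F : ℝ) : Dx B A C D E F = Dx A B C D E F := by unfold Dx; ring

lemma Dx_swap2 (A B C D E F : ℝ) : Dx A B D C E F = Dx A B C D E F := by unfold Dx; ring

lemma Dx_swap3 (A B C D E F : ℝ) : Dx A B C D F E = Dx A B C D E F := by unfold Dx; ring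

lemma Dx_cyc (A B C D E F : ℝ) : Dx C D E F A B = Dx A B C D E F := by unfold Dx; ring

lemma Dx_perm23 (A B C D E F : ℝ) : Dx A B E F C D = -Dx A B C D E F := by unfold Dx; ring

lemma smul_vadd_pt (r : ℝ) (v p : ℝ × ℝ) : r • v +ᵥ p = (r * v.1 + p.1, r * v.2 + p.2) := rfl

lemma collinear_iff_det (p₁ p₂ p₃ : ℝ × ℝ) :
    Collinear ℝ ({p₁, p₂, p₃} : Set (ℝ × ℝ)) ↔
      (p₂.1 - p₁.1) * (p₃.2 - p₁.2) - (p₃.1 - p₁.1) * (p₂.2 - p₁.2) = 0 := by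
  constructor
  · intro h
    rw [collinear_iff_of_mem (Set.mem_insert p₁ _)] at h
    obtain ⟨v, hv⟩ := h
    obtain ⟨r₂, h₂⟩ := hv p₂ (by simp)
    obtain ⟨r₃, h₃⟩ := hv p₃ (by simp)
    rw [smul_vadd_pt] at h₂ h₃
    have e2a : p₂.1 = r₂ * v.1 + p₁.1 := by rw [h₂]
    have e2b : p₂.2 = r₂ * v.2 + p₁.2 := by rw [h₂]
    have e3a : p₃.1 = r₃ * v.1 + p₁.1 := by rw [h₃]
    have e3b : p₃.2 = r₃ * v.2 + p₁.2 := by rw [h₃]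
    rw [e2a, e2b, e3a, e3b]; ring
  · intro h
    rcases eq_or_ne p₂ p₁ with h21 | h21
    · rw [h21, Set.insert_idem]
      exact collinear_pair ℝ p₁ p₃
    · rw [collinear_iff_of_mem (Set.mem_insert p₁ _)]
      refine ⟨p₂ - p₁, ?_⟩
      intro p hp
      simp only [Set.mem_insert_iff, Set.mem_singleton_iff] at hp
      rcases hp with rfl | rfl | rfl
      · exact ⟨0, by rw [smul_vadd_pt]; simp⟩
      · refine ⟨1, ?_⟩
        rw [smul_vadd_pt]
        simp [Prod.ext_iff]
      · rcases eq_or_ne p₂.1 p₁.1 with hx | hx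
        · have hy : p₂.2 ≠ p₁.2 := by
            intro hy; exact h21 (Prod.ext hx hy)
          have hy0 : p₂.2 - p₁.2 ≠ 0 := sub_ne_zero.mpr hy
          have hx0 : p₂.1 - p₁.1 = 0 := sub_eq_zero.mpr hx
          have h31 : p.1 - p₁.1 = 0 := by
            have h' : (p.1 - p₁.1) * (p₂.2 - p₁.2) = 0 := by
              linear_combination -h + (p.2 - p₁.2) * hx0
            rcases mul_eq_zero.mp h' with h'' | h''
            · exact h''
            · exact absurd h'' hy0
          refine ⟨(p.2 - p₁.2) / (p₂.2 - p₁.2), ?_⟩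
          rw [smul_vadd_pt]
          refine Prod.ext ?_ ?_
          · simp only [Prod.fst_sub]
            rw [hx0, mul_zero, zero_add]
            exact sub_eq_zero.mp h31
          · simp only [Prod.snd_sub]
            field_simp
            ring
        · have hx0 : p₂.1 - p₁.1 ≠ 0 := sub_ne_zero.mpr hx
          refine ⟨(p.1 - p₁.1) / (p₂.1 - p₁.1), ?_⟩
          rw [smul_vadd_pt]
          refine Prod.ext ?_ ?_
          · simp only [Prod.fst_sub]
            field_simp
            ring
          · simp only [Prod.snd_sub]
            field_simp
            first
            | linear_combination -h
            | linear_combination h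

open MvPolynomial in
/-- The collinearity determinant as a polynomial. -/
noncomputable def Ppoly (a b c d e f : ℕ) : MvPolynomial ℕ ℚ :=
  (X c + X d - (X a + X b)) *
      ((X e) ^ 2 + X e * X f + (X f) ^ 2 - ((X a) ^ 2 + X a * X b + (X b) ^ 2)) -
    (X e + X f - (X a + X b)) *
      ((X c) ^ 2 + X c * X d + (X d) ^ 2 - ((X a) ^ 2 + X a * X b + (X b) ^ 2))

lemma aeval_Ppoly (u : ℕ → ℝ) (a b c d e f : ℕ) :
    MvPolynomial.aeval u (Ppoly a b c d e f) = Dx (u a) (u b) (u c) (u d) (u e) (u f) := by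
  simp [Ppoly, Dx]

lemma fpair_eq {x y z w : ℕ} :
    ({x, y} : Finset ℕ) = {z, w} ↔ x = z ∧ y = w ∨ x = w ∧ y = z := by
  rw [← Finset.coe_inj]
  simp only [Finset.coe_insert, Finset.coe_singleton]
  exact Set.pair_eq_pair_iff

lemma L_disj (a b c d e f : ℕ) (hab : a ≠ b) (hef : e ≠ f)
    (hac : a ≠ c) (had : a ≠ d) (hbc : b ≠ c) (hbd : b ≠ d)
    (h13 : ({a, b} : Finset ℕ) ≠ {e, f}) (h23 : ({c, d} : Finset ℕ) ≠ {e, f})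
    (H : ∀ u : ℕ → ℝ, Dx (u a) (u b) (u c) (u d) (u e) (u f) = 0) : False := by
  classical
  set u : ℕ → ℝ :=
    fun n => if n = a then 1 else if n = b then -1 else if n = c ∨ n = d then 2 else 0 with hu
  have ha : u a = 1 := by simp [hu]
  have hb : u b = -1 := by simp [hu, Ne.symm hab]
  have hc : u c = 2 := by simp [hu, Ne.symm hac, Ne.symm hbc]
  have hd : u d = 2 := by simp [hu, Ne.symm had, Ne.symm hbd]
  have hval : ∀ n : ℕ, (u n = 1 ∧ n = a) ∨ (u n = -1 ∧ n = b) ∨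
      (u n = 2 ∧ (n = c ∨ n = d)) ∨ u n = 0 := by
    intro n
    by_cases h1 : n = a
    · exact Or.inl ⟨by simp [hu, h1], h1⟩
    by_cases h2 : n = b
    · exact Or.inr (Or.inl ⟨by simp [hu, h1, h2, Ne.symm hab], h2⟩)
    by_cases h3 : n = c ∨ n = d
    · exact Or.inr (Or.inr (Or.inl ⟨by simp [hu, h1, h2, h3], h3⟩))
    · exact Or.inr (Or.inr (Or.inr (by simp [hu, h1, h2, h3])))
  have H0 := H u
  rw [ha, hb, hc, hd] at H0
  rcases hval e with ⟨v1, he⟩ | ⟨v1, he⟩ | ⟨v1, he⟩ | v1 <;>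
    rcases hval f with ⟨v2, hf⟩ | ⟨v2, hf⟩ | ⟨v2, hf⟩ | v2 <;>
    rw [v1, v2] at H0
  -- (1,1)
  · norm_num [Dx] at H0
  -- (1,-1) : {e,f} = {a,b}
  · exact h13 (by rw [he, hf])
  · norm_num [Dx] at H0
  · norm_num [Dx] at H0
  -- (-1,1) : {e,f} = {b,a}
  · exact h13 (by rw [he, hf]; exact Finset.pair_comm a b)
  · norm_num [Dx] at H0
  · norm_num [Dx] at H0
  · norm_num [Dx] at H0
  · norm_num [Dx] at H0
  · norm_num [Dx] at H0
  -- (2,2) : {e,f} = {c,d}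
  · rcases he with he | he <;> rcases hf with hf | hf
    · exact hef (he.trans hf.symm)
    · exact h23 (by rw [he, hf])
    · exact h23 (by rw [he, hf]; exact Finset.pair_comm c d)
    · exact hef (he.trans hf.symm)
  · norm_num [Dx] at H0
  · norm_num [Dx] at H0
  · norm_num [Dx] at H0
  · norm_num [Dx] at H0
  · norm_num [Dx] at H0

lemma L_star (v p q r : ℕ) (hvp : v ≠ p) (hvq : v ≠ q) (hvr : v ≠ r)
    (hpq : p ≠ q) (hpr : p ≠ r) (hqr : q ≠ r)
    (H : ∀ u : ℕ → ℝ, Dx (u v) (u p) (u v) (u q) (u v) (u r) = 0) : False := by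
  classical
  set u : ℕ → ℝ := fun n => if n = v then 0 else if n = p then 1 else if n = q then 2 else 3
    with hu
  have h1 : u v = 0 := by simp [hu]
  have h2 : u p = 1 := by simp [hu, Ne.symm hvp]
  have h3 : u q = 2 := by simp [hu, Ne.symm hvq, Ne.symm hpq]
  have h4 : u r = 3 := by simp [hu, Ne.symm hvr, Ne.symm hpr, Ne.symm hqr]
  have H0 := H u
  rw [h1, h2, h3, h4] at H0
  norm_num [Dx] at H0

lemma comb1 (a b c d e f : ℕ) (hab : a ≠ b) (hcd : c ≠ d) (hef : e ≠ f)
    (h12 : ({a, b} : Finset ℕ) ≠ {c, d})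
    (h13 : ({a, b} : Finset ℕ) ≠ {e, f})
    (h23 : ({c, d} : Finset ℕ) ≠ {e, f})
    (hac : a = c)
    (k13 : a = e ∨ a = f ∨ b = e ∨ b = f)
    (k23 : c = e ∨ c = f ∨ d = e ∨ d = f)
    (H : ∀ u : ℕ → ℝ, Dx (u a) (u b) (u c) (u d) (u e) (u f) = 0) :
    ∃ i j k : ℕ, i ≠ j ∧ j ≠ k ∧ i ≠ k ∧
      ({a, b} : Finset ℕ) = {i, j} ∧
      ({c, d} : Finset ℕ) = {j, k} ∧
      ({e, f} : Finset ℕ) = {i, k} := by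
  subst hac
  have hbd : b ≠ d := fun h => h12 (by rw [h])
  rcases k13 with hk | hk | hk | hk
  · -- a = e : star with center a
    subst hk
    have hbf : b ≠ f := fun h => h13 (by rw [h])
    have hdf : d ≠ f := fun h => h23 (by rw [h])
    exact (L_star a b d f hab hcd hef hbd hbf hdf H).elim
  · -- a = f : star with center a
    subst hk
    have hbe : b ≠ e := fun h => h13 (by rw [h]; exact Finset.pair_comm a e)
    have hde : d ≠ e := fun h => h23 (by rw [h]; exact Finset.pair_comm a e)
    have H' : ∀ u : ℕ → ℝ, Dx (u a) (u b) (u a) (u d) (u a) (u e) = 0 := fun u => by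
      rw [← Dx_swap3]; exact H u
    exact (L_star a b d e hab hcd (Ne.symm hef) hbd hbe hde H').elim
  · -- b = e
    subst hk
    rcases k23 with hk' | hk' | hk' | hk'
    · exact absurd hk' hab
    · exact absurd (by rw [← hk']; exact Finset.pair_comm a b) h13
    · exact absurd hk'.symm hbd
    · subst hk'
      exact ⟨b, a, d, Ne.symm hab, hcd, hbd, Finset.pair_comm a b, rfl, rfl⟩
  · -- b = f
    subst hk
    rcases k23 with hk' | hk' | hk' | hk'
    · exact absurd (by rw [← hk']) h13
    · exact absurd hk' hab
    · subst hk'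
      exact ⟨b, a, d, Ne.symm hab, hcd, hbd, Finset.pair_comm a b, rfl, Finset.pair_comm d b⟩
    · exact absurd hk'.symm hbd

theorem stmt_7 (t : ℕ → ℝ) (ht : AlgebraicIndependent ℚ t)
    (a b c d e f : ℕ) (hab : a ≠ b) (hcd : c ≠ d) (hef : e ≠ f)
    (h12 : ({a, b} : Finset ℕ) ≠ {c, d})
    (h13 : ({a, b} : Finset ℕ) ≠ {e, f})
    (h23 : ({c, d} : Finset ℕ) ≠ {e, f}) :
    Collinear ℝ ({Ppt (t a) (t b), Ppt (t c) (t d), Ppt (t e) (t f)} : Set (ℝ × ℝ)) ↔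
      ∃ i j k : ℕ, i ≠ j ∧ j ≠ k ∧ i ≠ k ∧
        ({a, b} : Finset ℕ) = {i, j} ∧
        ({c, d} : Finset ℕ) = {j, k} ∧
        ({e, f} : Finset ℕ) = {i, k} := by
  constructor
  · intro hcol
    have hdet : Dx (t a) (t b) (t c) (t d) (t e) (t f) = 0 := by
      have h := (collinear_iff_det (Ppt (t a) (t b)) (Ppt (t c) (t d)) (Ppt (t e) (t f))).mp hcol
      simp only [Ppt] at h
      unfold Dx
      linear_combination h
    have H : ∀ u : ℕ → ℝ, Dx (u a) (u b) (u c) (u d) (u e) (u f) = 0 := by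
      have h0 : MvPolynomial.aeval t (Ppoly a b c d e f) = 0 := by
        rw [aeval_Ppoly]; exact hdet
      have hz : Ppoly a b c d e f = 0 :=
        (algebraicIndependent_iff_injective_aeval.mp ht) (by rw [map_zero]; exact h0)
      intro u
      rw [← aeval_Ppoly u, hz, map_zero]
    by_cases k12 : a = c ∨ a = d ∨ b = c ∨ b = d
    · by_cases k13 : a = e ∨ a = f ∨ b = e ∨ b = f
      · by_cases k23 : c = e ∨ c = f ∨ d = e ∨ d = f
        · rcases k12 with h | h | h | h
          · exact comb1 a b c d e f hab hcd hef h12 h13 h23 h k13 k23 H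
          · -- a = d : swap slot 2
            have H' : ∀ u : ℕ → ℝ, Dx (u a) (u b) (u d) (u c) (u e) (u f) = 0 := fun u => by
              rw [Dx_swap2]; exact H u
            obtain ⟨i, j, k, h1, h2, h3, h4, h5, h6⟩ :=
              comb1 a b d c e f hab (Ne.symm hcd) hef
                (by rw [Finset.pair_comm d c]; exact h12)
                h13 (by rw [Finset.pair_comm d c]; exact h23) h (by tauto) (by tauto) H'
            exact ⟨i, j, k, h1, h2, h3, h4, by rw [Finset.pair_comm c d]; exact h5, h6⟩
          · -- b = c : swap slot 1
            have H' : ∀ u : ℕ → ℝ, Dx (u b) (u a) (u c) (u d) (u e) (u f) = 0 := fun u => by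
              rw [Dx_swap1]; exact H u
            obtain ⟨i, j, k, h1, h2, h3, h4, h5, h6⟩ :=
              comb1 b a c d e f (Ne.symm hab) hcd hef
                (by rw [Finset.pair_comm b a]; exact h12)
                (by rw [Finset.pair_comm b a]; exact h13) h23 h (by tauto) k23 H'
            exact ⟨i, j, k, h1, h2, h3, by rw [Finset.pair_comm a b]; exact h4, h5, h6⟩
          · -- b = d : swap slots 1 and 2
            have H' : ∀ u : ℕ → ℝ, Dx (u b) (u a) (u d) (u c) (u e) (u f) = 0 := fun u => by
              rw [Dx_swap1, Dx_swap2]; exact H u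
            obtain ⟨i, j, k, h1, h2, h3, h4, h5, h6⟩ :=
              comb1 b a d c e f (Ne.symm hab) (Ne.symm hcd) hef
                (by rw [Finset.pair_comm b a, Finset.pair_comm d c]; exact h12)
                (by rw [Finset.pair_comm b a]; exact h13)
                (by rw [Finset.pair_comm d c]; exact h23) h (by tauto) (by tauto) H'
            exact ⟨i, j, k, h1, h2, h3, by rw [Finset.pair_comm a b]; exact h4,
              by rw [Finset.pair_comm c d]; exact h5, h6⟩
        · -- {c,d} and {e,f} disjoint
          push_neg at k23
          obtain ⟨kce, kcf, kde, kdf⟩ := k23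
          have H' : ∀ u : ℕ → ℝ, Dx (u c) (u d) (u e) (u f) (u a) (u b) = 0 := fun u => by
            rw [Dx_cyc]; exact H u
          exact ((L_disj c d e f a b hcd hab kce kcf kde kdf (Ne.symm h12) (Ne.symm h13)) H').elim
      · -- {a,b} and {e,f} disjoint
        push_neg at k13
        obtain ⟨kae, kaf, kbe, kbf⟩ := k13
        have H' : ∀ u : ℕ → ℝ, Dx (u a) (u b) (u e) (u f) (u c) (u d) = 0 := fun u => by
          rw [Dx_perm23, H u, neg_zero]
        exact ((L_disj a b e f c d hab hcd kae kaf kbe kbf h12 (Ne.symm h23)) H').elim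
    · -- {a,b} and {c,d} disjoint
      push_neg at k12
      obtain ⟨kac, kad, kbc, kbd⟩ := k12
      exact ((L_disj a b c d e f hab hef kac kad kbc kbd h13 h23) H).elim
  · rintro ⟨i, j, k, hij, hjk, hik, h1, h2, h3⟩
    have Pcomm : ∀ x y : ℝ, Ppt x y = Ppt y x := fun x y => by
      unfold Ppt; exact Prod.ext (by ring) (by ring)
    have e1 : Ppt (t a) (t b) = Ppt (t i) (t j) := by
      rcases fpair_eq.mp h1 with ⟨h, h'⟩ | ⟨h, h'⟩
      · rw [h, h']
      · rw [h, h']; exact Pcomm _ _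
    have e2 : Ppt (t c) (t d) = Ppt (t j) (t k) := by
      rcases fpair_eq.mp h2 with ⟨h, h'⟩ | ⟨h, h'⟩
      · rw [h, h']
      · rw [h, h']; exact Pcomm _ _
    have e3 : Ppt (t e) (t f) = Ppt (t i) (t k) := by
      rcases fpair_eq.mp h3 with ⟨h, h'⟩ | ⟨h, h'⟩
      · rw [h, h']
      · rw [h, h']; exact Pcomm _ _
    rw [e1, e2, e3, collinear_iff_det]
    simp only [Ppt]
    ring
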